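/- Let p be a prime number and let B be a finite-dimensional central simple algebra over ℚ, i.e., a finite-dimensional ℚ-algebra that is a simple ring whose center is ℚ·1. Set B_p = B ⊗_ℚ ℚ_p and let ι: B → B_p, b ↦ b ⊗ 1, be the canonical map. If a is a unit of B_p such that a · ι(b) · a^{-1} ∈ ι(B) for every b ∈ B, then there exist c ∈ ℚ_p^× and a unit u ∈ B^× such that a = c · ι(u). -/

import Mathlib

open TensorProduct

/-- In a finite-dimensional simple algebra, a nonzero element `u` such that `u * b`
is always a left multiple of `u` is a unit. -/
lemma aux_intertwiner_isUnit {B : Type*} [Ring B] [Algebra ℚ B] [FiniteDimensional ℚ B]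
    [IsSimpleRing B] {u : B} (hu : u ≠ 0) (h : ∀ b : B, ∃ y : B, u * b = y * u) :
    ∃ v : B, v * u = 1 ∧ u * v = 1 := by
  classical
  let J : TwoSidedIdeal B := TwoSidedIdeal.mk' {x | ∃ y, x = y * u}
    ⟨0, by simp⟩
    (by rintro x₁ x₂ ⟨y₁, rfl⟩ ⟨y₂, rfl⟩; exact ⟨y₁ + y₂, (add_mul _ _ _).symm⟩)
    (by rintro x ⟨y, rfl⟩; exact ⟨-y, (neg_mul _ _).symm⟩)
    (by rintro x₁ x₂ ⟨y, rfl⟩; exact ⟨x₁ * y, (mul_assoc _ _ _).symm⟩)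
    (by rintro x₁ x₂ ⟨y, rfl⟩
        obtain ⟨y', hy'⟩ := h x₂
        exact ⟨y * y', by rw [mul_assoc, hy', ← mul_assoc]⟩)
  have hmem : ∀ x : B, x ∈ J ↔ ∃ y, x = y * u := fun x => TwoSidedIdeal.mem_mk' _ _ _ _ _ _ x
  have hJtop : J = ⊤ := by
    rcases (IsSimpleOrder.eq_bot_or_eq_top J) with hbot | htop
    · exfalso
      have : u ∈ J := (hmem u).2 ⟨1, (one_mul u).symm⟩
      rw [hbot, TwoSidedIdeal.mem_bot] at this
      exact hu this
    · exact htop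
  -- every element is a left multiple of u, i.e. right multiplication by u is surjective
  have hsurj : Function.Surjective (LinearMap.mulRight ℚ u) := by
    intro x
    obtain ⟨y, hy⟩ := (hmem x).1 (hJtop ▸ TwoSidedIdeal.mem_top B)
    exact ⟨y, hy.symm⟩
  have hinj : Function.Injective (LinearMap.mulRight ℚ u) :=
    (LinearMap.injective_iff_surjective).2 hsurj
  obtain ⟨v, hv⟩ := hsurj 1
  refine ⟨v, hv, ?_⟩
  have : LinearMap.mulRight ℚ u (u * v) = LinearMap.mulRight ℚ u 1 := by
    simp only [LinearMap.mulRight_apply, one_mul, mul_assoc]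
    rw [show v * u = (1:B) from hv, mul_one]
  exact hinj this

set_option maxHeartbeats 1000000 in
theorem unit_normalizing_rational_points_is_scalar_multiple
    (p : ℕ) [Fact p.Prime]
    {B : Type*} [Ring B] [Algebra ℚ B] [FiniteDimensional ℚ B]
    [Algebra.IsCentral ℚ B] [IsSimpleRing B]
    (ι : B →ₐ[ℚ] B ⊗[ℚ] ℚ_[p])
    (hι : ι = Algebra.TensorProduct.includeLeft)
    (a : (B ⊗[ℚ] ℚ_[p])ˣ)
    (ha : ∀ b : B, ∃ b' : B,
      (a : B ⊗[ℚ] ℚ_[p]) * ι b * ((↑a⁻¹ : B ⊗[ℚ] ℚ_[p])) = ι b') :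
    ∃ (c : ℚ_[p]ˣ) (u : Bˣ),
      (a : B ⊗[ℚ] ℚ_[p]) =
        (Algebra.TensorProduct.includeRight (c : ℚ_[p]) : B ⊗[ℚ] ℚ_[p]) * ι (u : B) := by
  classical
  subst hι
  rcases subsingleton_or_nontrivial (B ⊗[ℚ] ℚ_[p]) with hsub | hnt
  · exact ⟨1, 1, Subsingleton.elim _ _⟩
  -- the conjugation map φ
  set K := ℚ_[p]
  let φ : B → B := fun b => (ha b).choose
  have hφ : ∀ b : B, (a : B ⊗[ℚ] K) * (b ⊗ₜ[ℚ] (1:K)) * (↑a⁻¹ : B ⊗[ℚ] K)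
      = (φ b) ⊗ₜ[ℚ] (1:K) := fun b => (ha b).choose_spec
  have hφ' : ∀ b : B, (a : B ⊗[ℚ] K) * (b ⊗ₜ[ℚ] (1:K))
      = ((φ b) ⊗ₜ[ℚ] (1:K)) * (a : B ⊗[ℚ] K) := by
    intro b
    conv_lhs => rw [← Units.inv_mul_cancel_right
      ((a : B ⊗[ℚ] K) * (b ⊗ₜ[ℚ] (1:K))) a]
    rw [hφ b]
  -- a basis of B
  let n := Module.finrank ℚ B
  let e : Module.Basis (Fin n) ℚ B := Module.finBasis ℚ B
  -- the intertwining operator over ℚ and its base change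
  let T : B →ₗ[ℚ] (Fin n → B) :=
    LinearMap.pi fun j => LinearMap.mulRight ℚ (e j) - LinearMap.mulLeft ℚ (φ (e j))
  let S : B ⊗[ℚ] K →ₗ[ℚ] (Fin n → B ⊗[ℚ] K) :=
    LinearMap.pi fun j => LinearMap.mulRight ℚ ((e j) ⊗ₜ[ℚ] (1:K))
      - LinearMap.mulLeft ℚ ((φ (e j)) ⊗ₜ[ℚ] (1:K))
  let Q : (Fin n → B ⊗[ℚ] K) →ₗ[ℚ] (Fin n → B) ⊗[ℚ] K :=
    ∑ j : Fin n, (LinearMap.rTensor K (LinearMap.single ℚ (fun _ : Fin n => B) j)).comp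
      (LinearMap.proj j)
  have hQS : Q.comp S = LinearMap.rTensor K T := by
    apply TensorProduct.ext'
    intro y c
    have hS : S (y ⊗ₜ[ℚ] c) = fun j => (T y j) ⊗ₜ[ℚ] c := by
      funext j
      simp only [S, T, LinearMap.pi_apply, LinearMap.sub_apply, LinearMap.mulRight_apply,
        LinearMap.mulLeft_apply, Algebra.TensorProduct.tmul_mul_tmul, one_mul, mul_one,
        ← TensorProduct.sub_tmul]
    simp only [LinearMap.comp_apply, hS, LinearMap.rTensor_tmul]
    simp only [Q, LinearMap.sum_apply, LinearMap.comp_apply, LinearMap.proj_apply,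
      LinearMap.rTensor_tmul, LinearMap.coe_single]
    rw [← TensorProduct.sum_tmul]
    congr 1
    exact Finset.univ_sum_single (T y)
  -- a lies in the kernel of S
  have hSa : S (a : B ⊗[ℚ] K) = 0 := by
    funext j
    simp only [S, LinearMap.pi_apply, LinearMap.sub_apply, LinearMap.mulRight_apply,
      LinearMap.mulLeft_apply, Pi.zero_apply]
    rw [hφ' (e j), sub_self]
  -- hence T has nontrivial kernel
  have hV : ∃ u : B, u ≠ 0 ∧ T u = 0 := by
    by_contra hc
    push_neg at hc
    have hTinj : Function.Injective T := by
      rw [← LinearMap.ker_eq_bot, LinearMap.ker_eq_bot']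
      intro m hm
      by_contra hm0
      exact hc m hm0 hm
    have hrT : Function.Injective (LinearMap.rTensor K T) :=
      Module.Flat.rTensor_preserves_injective_linearMap T hTinj
    have hSinj : Function.Injective S := by
      intro x y hxy
      apply hrT
      rw [← hQS]
      simp [LinearMap.comp_apply, hxy]
    have : (a : B ⊗[ℚ] K) = 0 := by
      apply hSinj
      rw [hSa, map_zero]
    exact Units.ne_zero a this
  obtain ⟨u, hu0, hTu⟩ := hV
  -- u intertwines: u * (e j) = φ (e j) * u, extended to all b by linearity
  have hue : ∀ j, u * e j = φ (e j) * u := by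
    intro j
    have := congrFun hTu j
    simpa only [T, LinearMap.pi_apply, LinearMap.sub_apply, LinearMap.mulRight_apply,
      LinearMap.mulLeft_apply, Pi.zero_apply, sub_eq_zero] using this
  have hub : ∀ b : B, ∃ y : B, u * b = y * u := by
    intro b
    let P : Submodule ℚ B :=
      { carrier := {b | ∃ y, u * b = y * u}
        add_mem' := by
          rintro b₁ b₂ ⟨y₁, h₁⟩ ⟨y₂, h₂⟩
          exact ⟨y₁ + y₂, by rw [mul_add, h₁, h₂, add_mul]⟩
        zero_mem' := ⟨0, by simp⟩
        smul_mem' := by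
          rintro q b ⟨y, hy⟩
          exact ⟨q • y, by rw [mul_smul_comm, hy, smul_mul_assoc]⟩ }
    have hP : P = ⊤ := by
      rw [← top_le_iff, ← e.span_eq]
      rw [Submodule.span_le]
      rintro x ⟨j, rfl⟩
      exact ⟨φ (e j), hue j⟩
    have : b ∈ P := hP ▸ Submodule.mem_top
    exact this
  obtain ⟨v, hvu, huv⟩ := aux_intertwiner_isUnit hu0 hub
  -- z = (v ⊗ 1) * a commutes with all b ⊗ 1
  set z : B ⊗[ℚ] K := (v ⊗ₜ[ℚ] (1:K)) * (a : B ⊗[ℚ] K) with hz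
  have haz : (a : B ⊗[ℚ] K) = (u ⊗ₜ[ℚ] (1:K)) * z := by
    rw [hz, ← mul_assoc, Algebra.TensorProduct.tmul_mul_tmul, huv, mul_one,
      Algebra.TensorProduct.one_def.symm, one_mul]
  have hcomm_e : ∀ j, z * ((e j) ⊗ₜ[ℚ] (1:K)) = ((e j) ⊗ₜ[ℚ] (1:K)) * z := by
    intro j
    have key : v * φ (e j) = e j * v := by
      have : v * φ (e j) * (u * v) = v * φ (e j) := by rw [huv, mul_one]
      calc v * φ (e j) = v * φ (e j) * (u * v) := this.symm
        _ = v * (φ (e j) * u) * v := by rw [← mul_assoc, mul_assoc v]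
        _ = v * (u * e j) * v := by rw [hue j]
        _ = (v * u) * (e j * v) := by rw [mul_assoc, mul_assoc, mul_assoc]
        _ = e j * v := by rw [hvu, one_mul]
    rw [hz, mul_assoc, hφ' (e j), ← mul_assoc, ← mul_assoc,
      Algebra.TensorProduct.tmul_mul_tmul, Algebra.TensorProduct.tmul_mul_tmul,
      one_mul, key]
  have hcomm : ∀ b : B, z * (b ⊗ₜ[ℚ] (1:K)) = (b ⊗ₜ[ℚ] (1:K)) * z := by
    intro b
    let P : Submodule ℚ B :=
      { carrier := {b | z * (b ⊗ₜ[ℚ] (1:K)) = (b ⊗ₜ[ℚ] (1:K)) * z}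
        add_mem' := by
          intro b₁ b₂ h₁ h₂
          simp only [Set.mem_setOf_eq, TensorProduct.add_tmul, mul_add, add_mul] at *
          rw [h₁, h₂]
        zero_mem' := by simp
        smul_mem' := by
          intro q b hb
          simp only [Set.mem_setOf_eq] at hb ⊢
          rw [← TensorProduct.smul_tmul', mul_smul_comm, smul_mul_assoc, hb] }
    have hP : P = ⊤ := by
      rw [← top_le_iff, ← e.span_eq, Submodule.span_le]
      rintro x ⟨j, rfl⟩
      exact hcomm_e j
    have : b ∈ P := hP ▸ Submodule.mem_top
    exact this
  -- the centralizer of B ⊗ 1 is 1 ⊗ K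
  let d : Module.Basis (Module.Free.ChooseBasisIndex ℚ K) ℚ K := Module.Free.chooseBasis ℚ K
  let F := TensorProduct.equivFinsuppOfBasisRight (M := B) d
  have hF1 : ∀ (b : B) (x : B ⊗[ℚ] K) i, F ((b ⊗ₜ[ℚ] (1:K)) * x) i = b * F x i := by
    intro b x i
    induction x using TensorProduct.induction_on with
    | zero => simp
    | tmul y c =>
        rw [Algebra.TensorProduct.tmul_mul_tmul, one_mul,
          TensorProduct.equivFinsuppOfBasisRight_apply_tmul_apply,
          TensorProduct.equivFinsuppOfBasisRight_apply_tmul_apply, mul_smul_comm]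
    | add x₁ x₂ h₁ h₂ => simp only [mul_add, map_add, Finsupp.add_apply, h₁, h₂]
  have hF2 : ∀ (b : B) (x : B ⊗[ℚ] K) i, F (x * (b ⊗ₜ[ℚ] (1:K))) i = F x i * b := by
    intro b x i
    induction x using TensorProduct.induction_on with
    | zero => simp
    | tmul y c =>
        rw [Algebra.TensorProduct.tmul_mul_tmul, mul_one,
          TensorProduct.equivFinsuppOfBasisRight_apply_tmul_apply,
          TensorProduct.equivFinsuppOfBasisRight_apply_tmul_apply, smul_mul_assoc]
    | add x₁ x₂ h₁ h₂ => simp only [add_mul, map_add, Finsupp.add_apply, h₁, h₂]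
  -- each coefficient of z is central in B, hence a rational scalar
  have hcen : ∀ i, ∃ q : ℚ, F z i = algebraMap ℚ B q := by
    intro i
    have : F z i ∈ Subalgebra.center ℚ B := by
      rw [Subalgebra.mem_center_iff]
      intro b
      rw [← hF1 b z i, ← hF2 b z i, hcomm b]
    obtain ⟨q, hq⟩ := (Algebra.IsCentral.mem_center_iff ℚ).1 this
    exact ⟨q, hq⟩
  choose q hq using hcen
  -- reconstruct z = 1 ⊗ c₀
  set c₀ : K := (F z).support.sum (fun i => q i • d i) with hc₀
  have hzc : z = (1:B) ⊗ₜ[ℚ] c₀ := by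
    have : z = F.symm (F z) := (F.symm_apply_apply z).symm
    rw [this, TensorProduct.equivFinsuppOfBasisRight_symm_apply, Finsupp.sum, hc₀,
      TensorProduct.tmul_sum]
    apply Finset.sum_congr rfl
    intro i _
    rw [hq i, Algebra.algebraMap_eq_smul_one, TensorProduct.smul_tmul]
  have hc0 : c₀ ≠ 0 := by
    intro h0
    apply Units.ne_zero a
    rw [haz, hzc, h0, TensorProduct.tmul_zero, mul_zero]
  -- assemble the answer
  refine ⟨Units.mk0 c₀ hc0, ⟨u, v, huv, hvu⟩, ?_⟩
  rw [haz, hzc]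
  simp only [Units.val_mk0, Algebra.TensorProduct.includeRight_apply,
    Algebra.TensorProduct.includeLeft_apply, Units.val_mk]
  rw [Algebra.TensorProduct.tmul_mul_tmul, Algebra.TensorProduct.tmul_mul_tmul,
    one_mul, mul_one, one_mul, mul_one]
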